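/- Let p be a prime, let m ≥ 2 be an integer with p ∤ m, let f ∈ 𝔽_p[x], and set F(x,y) := y^m − f(x) ∈ 𝔽_p[x,y]. Let ∇ denote the operator ∂^{2p−2}/∂x^{p−1}∂y^{p−1}. Then for all integers k, ℓ with 1 ≤ k ≤ p and 1 ≤ ℓ ≤ p one has ∇(F^{p−1} · x^{k−1} y^{ℓ−1}) = ∑ f^{n_j}_{i·p−k} · x^{(i−1)·p} · y^{(j−1)·p}, where the sum is over pairs of integers i ≥ 1, j ≥ 1 such that m divides j·p − ℓ and 0 ≤ (j·p − ℓ)/m ≤ p−1, and where n_j := p − 1 − (j·p − ℓ)/m and f^n_a denotes the coefficient of x^a in f(x)^n. -/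

import Mathlib

open MvPolynomial

lemma coeff_pderiv {σ : Type*} [DecidableEq σ] {R : Type*} [CommSemiring R]
    (v : σ) (q : MvPolynomial σ R) (d : σ →₀ ℕ) :
    coeff d (pderiv v q) = ((d v + 1 : ℕ) : R) * coeff (d + Finsupp.single v 1) q := by
  induction q using MvPolynomial.induction_on' with
  | add q r hq hr => simp [map_add, coeff_add, hq, hr, mul_add]
  | monomial s a =>
    rw [pderiv_monomial, coeff_monomial, coeff_monomial]
    split_ifs with h1 h2 h2
    · subst h2
      simp [Finsupp.add_apply, Finsupp.single_apply, mul_comm]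
    · have hs : s v = 0 := by
        by_contra h
        exact h2 (by rw [← h1, tsub_add_cancel_of_le (Finsupp.single_le_iff.2 (Nat.one_le_iff_ne_zero.2 h))])
      simp [hs]
    · exact absurd (by subst h2; exact add_tsub_cancel_right _ _) h1
    · simp

lemma coeff_pderiv_iterate {σ : Type*} [DecidableEq σ] {R : Type*} [CommSemiring R]
    (v : σ) (n : ℕ) (q : MvPolynomial σ R) (d : σ →₀ ℕ) :
    coeff d ((fun q => pderiv v q)^[n] q)
      = (∏ s ∈ Finset.range n, ((d v + s + 1 : ℕ) : R)) * coeff (d + Finsupp.single v n) q := by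
  induction n generalizing d with
  | zero => simp
  | succ n ih =>
    rw [Function.iterate_succ_apply', _root_.coeff_pderiv, ih]
    have h1 : ((d + Finsupp.single v 1 : σ →₀ ℕ)) v = d v + 1 := by simp
    have h2 : d + Finsupp.single v 1 + Finsupp.single v n = d + Finsupp.single v (n + 1) := by
      rw [add_assoc, ← Finsupp.single_add, add_comm 1 n]
    have h3 : (∏ s ∈ Finset.range (n+1), ((d v + s + 1 : ℕ) : R))
        = ((d v + 1 : ℕ) : R) * ∏ s ∈ Finset.range n, (((d v + 1) + s + 1 : ℕ) : R) := by
      rw [Finset.prod_range_succ', mul_comm]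
      congr 1
      · exact Finset.prod_congr rfl fun s _ => by congr 1; omega
    rw [h1, h2, h3]
    ring

lemma prod_consec (p : ℕ) [hp : Fact p.Prime] (a : ℕ) :
    (∏ s ∈ Finset.range (p - 1), ((a + s + 1 : ℕ) : ZMod p))
      = if p ∣ a then (-1 : ZMod p) else 0 := by
  split_ifs with h
  · have ha : (a : ZMod p) = 0 := (ZMod.natCast_eq_zero_iff a p).2 h
    have : ∀ s ∈ Finset.range (p-1), ((a + s + 1 : ℕ) : ZMod p) = ((s + 1 : ℕ) : ZMod p) := by
      intro s _; push_cast [ha]; ring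
    rw [Finset.prod_congr rfl this, ← Nat.cast_prod, Finset.prod_range_add_one_eq_factorial]
    exact ZMod.wilsons_lemma p
  · have hp2 := hp.out.two_le
    set r := a % p with hr
    have hr1 : 1 ≤ r := by
      rcases Nat.eq_zero_or_pos r with h0 | h0
      · exact absurd (Nat.dvd_of_mod_eq_zero h0) h
      · exact h0
    have hrp : r < p := Nat.mod_lt _ (by omega)
    apply Finset.prod_eq_zero (i := p - 1 - r) (Finset.mem_range.2 (by omega))
    rw [ZMod.natCast_eq_zero_iff]
    have hra : r ≤ a := Nat.mod_le a p
    have : a + (p - 1 - r) + 1 = (a - r) + p := by omega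
    rw [this]
    have hdvd : p ∣ a - r := ⟨a / p, by have := Nat.div_add_mod a p; omega⟩
    exact Nat.dvd_add hdvd dvd_rfl

lemma cast_choose_sub_one (p : ℕ) [hp : Fact p.Prime] (t : ℕ) (ht : t ≤ p - 1) :
    (((p - 1).choose t : ℕ) : ZMod p) = (-1 : ZMod p) ^ t := by
  induction t with
  | zero => simp
  | succ t ih =>
    have ht' : t ≤ p - 1 := by omega
    have hq := Nat.choose_succ_right_eq (p - 1) t
    have hcast := congrArg (fun n : ℕ => (n : ZMod p)) hq
    push_cast at hcast
    have hsub : ((p - 1 - t : ℕ) : ZMod p) = -((t + 1 : ℕ) : ZMod p) := by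
      have h1 : p - 1 - t + (t + 1) = p := by
        have := hp.out.two_le; omega
      have := congrArg (fun n : ℕ => (n : ZMod p)) h1
      push_cast at this
      have hp0 : ((p : ℕ) : ZMod p) = 0 := ZMod.natCast_self p
      push_cast at hp0 ⊢
      linear_combination this + hp0
    rw [ih ht', hsub] at hcast
    have hunit : ((t + 1 : ℕ) : ZMod p) ≠ 0 := by
      rw [Ne, ZMod.natCast_eq_zero_iff]
      intro hd
      have := Nat.le_of_dvd (by omega) hd
      have := hp.out.two_le
      omega
    have key : (((p-1).choose (t+1) : ℕ) : ZMod p) * ((t+1 : ℕ) : ZMod p)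
        = (-1 : ZMod p)^(t+1) * ((t+1 : ℕ) : ZMod p) := by
      push_cast at hcast ⊢
      linear_combination hcast
    exact_mod_cast mul_right_cancel₀ hunit key

lemma neg_one_pow_sub_one (p : ℕ) [hp : Fact p.Prime] : ((-1 : ZMod p)) ^ (p - 1) = 1 :=
  ZMod.pow_card_sub_one_eq_one (neg_ne_zero.mpr one_ne_zero)

lemma expand_pow (p : ℕ) [hp : Fact p.Prime] (m : ℕ) (f : Polynomial (ZMod p)) :
    ((X 1 ^ m - Polynomial.aeval (X 0 : MvPolynomial (Fin 2) (ZMod p)) f) ^ (p - 1))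
      = ∑ t ∈ Finset.range p,
          Polynomial.aeval (X 0 : MvPolynomial (Fin 2) (ZMod p)) (f ^ (p - 1 - t)) * X 1 ^ (m * t) := by
  have h2 := hp.out.two_le
  rw [sub_pow]
  have hr : p - 1 + 1 = p := by omega
  rw [hr]
  apply Finset.sum_congr rfl
  intro t ht
  rw [Finset.mem_range] at ht
  have hcoef : ((-1 : MvPolynomial (Fin 2) (ZMod p)) ^ (t + (p - 1))) * (((p-1).choose t : ℕ) : MvPolynomial (Fin 2) (ZMod p)) = 1 := by
    have : (((p-1).choose t : ℕ) : MvPolynomial (Fin 2) (ZMod p)) = C (((p-1).choose t : ℕ) : ZMod p) := by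
      push_cast
      simp
    rw [this, cast_choose_sub_one p t (by omega)]
    have : ((-1 : MvPolynomial (Fin 2) (ZMod p)) ^ (t + (p - 1))) = C ((-1 : ZMod p) ^ (t + (p-1))) := by
      simp
    rw [this, ← map_mul, ← pow_add]
    have : t + (p - 1) + t = 2 * t + (p - 1) := by omega
    rw [this, pow_add, pow_mul, neg_one_sq, one_pow, one_mul, neg_one_pow_sub_one p, map_one]
  calc (-1 : MvPolynomial (Fin 2) (ZMod p)) ^ (t + (p-1)) * (X 1 ^ m) ^ t
        * (Polynomial.aeval (X 0 : MvPolynomial (Fin 2) (ZMod p)) f) ^ (p - 1 - t)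
        * (((p-1).choose t : ℕ) : MvPolynomial (Fin 2) (ZMod p))
      = ((-1 : MvPolynomial (Fin 2) (ZMod p)) ^ (t + (p-1)) * (((p-1).choose t : ℕ) : MvPolynomial (Fin 2) (ZMod p)))
        * ((Polynomial.aeval (X 0 : MvPolynomial (Fin 2) (ZMod p)) f) ^ (p - 1 - t) * X 1 ^ (m * t)) := by
        rw [pow_mul]; ring
    _ = Polynomial.aeval (X 0 : MvPolynomial (Fin 2) (ZMod p)) (f ^ (p - 1 - t)) * X 1 ^ (m * t) := by
        rw [hcoef, one_mul, map_pow]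

lemma single_add_single_eq_iff (n c : ℕ) (d : Fin 2 →₀ ℕ) :
    (Finsupp.single (0 : Fin 2) n + Finsupp.single 1 c = d) ↔ (d 0 = n ∧ d 1 = c) := by
  constructor
  · rintro rfl
    simp
  · rintro ⟨h0, h1⟩
    ext i
    fin_cases i <;> simp [← h0, ← h1]

lemma coeff_C_mul_X_pows {p : ℕ} (a : ZMod p) (u v : ℕ) (d : Fin 2 →₀ ℕ) :
    coeff d (C a * X 0 ^ u * X 1 ^ v : MvPolynomial (Fin 2) (ZMod p))
      = if d 0 = u ∧ d 1 = v then a else 0 := by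
  rw [X_pow_eq_monomial, X_pow_eq_monomial, C_mul_monomial, monomial_mul, coeff_monomial]
  rw [mul_one, mul_one]
  simp only [single_add_single_eq_iff]

lemma coeff_aeval_mul_X_pow {p : ℕ} (g : Polynomial (ZMod p)) (c : ℕ) (d : Fin 2 →₀ ℕ) :
    coeff d (Polynomial.aeval (X 0 : MvPolynomial (Fin 2) (ZMod p)) g * X 1 ^ c)
      = if d 1 = c then g.coeff (d 0) else 0 := by
  induction g using Polynomial.induction_on' with
  | add q r hq hr =>
    rw [map_add, add_mul, coeff_add, hq, hr, Polynomial.coeff_add]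
    split_ifs <;> simp
  | monomial n a =>
    rw [Polynomial.aeval_monomial]
    have : (algebraMap (ZMod p) (MvPolynomial (Fin 2) (ZMod p))) a = C a := rfl
    rw [this, coeff_C_mul_X_pows, Polynomial.coeff_monomial]
    by_cases h1 : d 1 = c <;> by_cases h0 : d 0 = n <;> simp [h1, h0, eq_comm]
    exact fun h => absurd h.symm h0

/-- The differential operator `∇ = ∂^{2p−2}/∂x^{p−1}∂y^{p−1}` on `𝔽_p[x,y]`
(`x` is the variable `0`, `y` the variable `1`). -/
noncomputable def nabla (p : ℕ) :
    MvPolynomial (Fin 2) (ZMod p) → MvPolynomial (Fin 2) (ZMod p) :=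
  (fun q => pderiv (0 : Fin 2) q)^[p - 1] ∘ (fun q => pderiv (1 : Fin 2) q)^[p - 1]

/-- Let `p` be prime, `m ≥ 2` with `p ∤ m`, `f ∈ 𝔽_p[x]`, and
`F(x,y) := y^m − f(x)`.  For all `1 ≤ k, ℓ ≤ p` one has
`∇(F^{p−1} · x^{k−1} y^{ℓ−1}) = ∑ f^{n_j}_{i·p−k} · x^{(i−1)·p} · y^{(j−1)·p}`,
the sum being over `i, j ≥ 1` with `m ∣ j·p − ℓ` and `0 ≤ (j·p − ℓ)/m ≤ p−1`,
where `n_j := p − 1 − (j·p − ℓ)/m` and `f^n_a` is the coefficient of `x^a` in `f^n`. -/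
theorem stmt9 (p : ℕ) (hp : p.Prime) (m : ℕ) (hm : 2 ≤ m) (hpm : ¬ p ∣ m)
    (f : Polynomial (ZMod p)) (k ℓ : ℕ)
    (hk1 : 1 ≤ k) (hkp : k ≤ p) (hl1 : 1 ≤ ℓ) (hlp : ℓ ≤ p) :
    nabla p
        (((X 1 ^ m - Polynomial.aeval (X 0 : MvPolynomial (Fin 2) (ZMod p)) f) ^ (p - 1))
          * X 0 ^ (k - 1) * X 1 ^ (ℓ - 1))
      = ∑ᶠ (i : ℕ) (j : ℕ),
          if m ∣ ((j + 1) * p - ℓ) ∧ ((j + 1) * p - ℓ) / m ≤ p - 1 then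
            C ((f ^ (p - 1 - ((j + 1) * p - ℓ) / m)).coeff ((i + 1) * p - k))
              * X 0 ^ (i * p) * X 1 ^ (j * p)
          else 0 := by
  classical
  haveI : Fact p.Prime := ⟨hp⟩
  have hp2 : 2 ≤ p := hp.two_le
  set D := f.natDegree with hD
  set I := (p - 1) * D + 1 with hI
  set G : ℕ → ℕ → MvPolynomial (Fin 2) (ZMod p) := fun i j =>
    if m ∣ ((j + 1) * p - ℓ) ∧ ((j + 1) * p - ℓ) / m ≤ p - 1 then
      C ((f ^ (p - 1 - ((j + 1) * p - ℓ) / m)).coeff ((i + 1) * p - k))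
        * X 0 ^ (i * p) * X 1 ^ (j * p)
    else 0 with hG
  -- coefficient vanishing for large i
  have hcoeff0 : ∀ n, n ≤ p - 1 → ∀ i, I ≤ i → (f ^ n).coeff ((i + 1) * p - k) = 0 := by
    intro n hn i hi
    apply Polynomial.coeff_eq_zero_of_natDegree_lt
    have h1 : (f ^ n).natDegree ≤ n * D := Polynomial.natDegree_pow_le
    have h2 : n * D ≤ (p - 1) * D := Nat.mul_le_mul_right D hn
    have h3 : i ≤ i * p := Nat.le_mul_of_pos_right i (by omega)
    have h4 : i * p + p = (i + 1) * p := by ring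
    omega
  -- condition fails for large j
  have hcond0 : ∀ j, m ≤ j →
      ¬ (m ∣ ((j + 1) * p - ℓ) ∧ ((j + 1) * p - ℓ) / m ≤ p - 1) := by
    rintro j hj ⟨hdvd, hle⟩
    have h0 : m * p ≤ j * p := Nat.mul_le_mul_right p hj
    have h4 : j * p + p = (j + 1) * p := by ring
    have h1 : m * p ≤ (j + 1) * p - ℓ := by omega
    have h2 : p ≤ ((j + 1) * p - ℓ) / m := by
      have := Nat.div_le_div_right (c := m) h1
      rwa [Nat.mul_div_cancel_left p (by omega : 0 < m)] at this
    omega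
  have hGz : ∀ i j, I ≤ i ∨ m ≤ j → G i j = 0 := by
    rintro i j (hi | hj)
    · simp only [hG]
      split_ifs with h
      · rw [hcoeff0 _ (Nat.sub_le _ _) i hi]
        simp
      · rfl
    · simp only [hG]
      rw [if_neg (hcond0 j hj)]
  have hfin : (∑ᶠ (i : ℕ) (j : ℕ), G i j)
      = ∑ i ∈ Finset.range I, ∑ j ∈ Finset.range m, G i j := by
    rw [finsum_eq_sum_of_support_subset _ (s := Finset.range I) ?_]
    · refine Finset.sum_congr rfl fun i _ => ?_
      refine finsum_eq_sum_of_support_subset _ fun j hj => ?_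
      simp only [Finset.coe_range, Set.mem_Iio]
      by_contra hc
      exact hj (hGz i j (Or.inr (by omega)))
    · intro i hi
      simp only [Finset.coe_range, Set.mem_Iio]
      by_contra hc
      apply hi
      have : ∀ j, G i j = 0 := fun j => hGz i j (Or.inl (by omega))
      simp only [Function.mem_support, ne_eq, not_not]
      exact finsum_eq_zero_of_forall_eq_zero this
  show _ = ∑ᶠ (i : ℕ) (j : ℕ), G i j
  rw [hfin]
  apply MvPolynomial.ext
  intro d
  -- LHS coefficient
  rw [nabla, Function.comp_apply, coeff_pderiv_iterate, coeff_pderiv_iterate]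
  have e1 : ((d + Finsupp.single (0 : Fin 2) (p - 1) : Fin 2 →₀ ℕ)) 1 = d 1 := by
    simp [Finsupp.single_apply]
  rw [e1, prod_consec p (d 0), prod_consec p (d 1)]
  set D' : Fin 2 →₀ ℕ :=
    d + Finsupp.single (0 : Fin 2) (p - 1) + Finsupp.single (1 : Fin 2) (p - 1) with hD'
  have eD0 : D' 0 = d 0 + (p - 1) := by simp [hD', Finsupp.single_apply]
  have eD1 : D' 1 = d 1 + (p - 1) := by simp [hD', Finsupp.single_apply]
  -- RHS coefficient
  rw [MvPolynomial.coeff_sum]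
  simp only [MvPolynomial.coeff_sum]
  -- expansion of Q's coefficient
  have hQ : coeff D' (((X 1 ^ m - Polynomial.aeval (X 0 : MvPolynomial (Fin 2) (ZMod p)) f)
        ^ (p - 1)) * X 0 ^ (k - 1) * X 1 ^ (ℓ - 1))
      = ∑ t ∈ Finset.range p,
          (if D' 1 = m * t + ℓ - 1 then
            (f ^ (p - 1 - t) * Polynomial.X ^ (k - 1)).coeff (D' 0) else 0) := by
    rw [expand_pow p m f, Finset.sum_mul, Finset.sum_mul, MvPolynomial.coeff_sum]
    refine Finset.sum_congr rfl fun t _ => ?_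
    have hterm : Polynomial.aeval (X 0 : MvPolynomial (Fin 2) (ZMod p)) (f ^ (p - 1 - t))
          * X 1 ^ (m * t) * X 0 ^ (k - 1) * X 1 ^ (ℓ - 1)
        = Polynomial.aeval (X 0 : MvPolynomial (Fin 2) (ZMod p))
            (f ^ (p - 1 - t) * Polynomial.X ^ (k - 1)) * X 1 ^ (m * t + ℓ - 1) := by
      simp only [map_mul, map_pow, Polynomial.aeval_X]
      rw [show m * t + ℓ - 1 = m * t + (ℓ - 1) by omega, pow_add]
      ring
    rw [hterm, coeff_aeval_mul_X_pow]
  by_cases hab : p ∣ d 0 ∧ p ∣ d 1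
  · obtain ⟨⟨i0, hi0⟩, ⟨j0, hj0⟩⟩ := hab
    rw [if_pos ⟨i0, hi0⟩, if_pos ⟨j0, hj0⟩]
    set N := (j0 + 1) * p - ℓ with hN
    set E : ZMod p := if m ∣ N ∧ N / m ≤ p - 1 then
        (f ^ (p - 1 - N / m)).coeff ((i0 + 1) * p - k) else 0 with hE
    have hNN : (j0 + 1) * p = p * j0 + p := by ring
    have hII : (i0 + 1) * p = p * i0 + p := by ring
    -- LHS equals E
    have hLHS : coeff D' (((X 1 ^ m - Polynomial.aeval (X 0 : MvPolynomial (Fin 2) (ZMod p)) f)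
          ^ (p - 1)) * X 0 ^ (k - 1) * X 1 ^ (ℓ - 1)) = E := by
      rw [hQ]
      have hcongr : ∀ t ∈ Finset.range p,
          (if D' 1 = m * t + ℓ - 1 then
            (f ^ (p - 1 - t) * Polynomial.X ^ (k - 1)).coeff (D' 0) else 0)
          = (if m * t = N then (f ^ (p - 1 - t)).coeff ((i0 + 1) * p - k) else 0) := by
        intro t _
        have hcondiff : (D' 1 = m * t + ℓ - 1) ↔ (m * t = N) := by
          rw [eD1, hj0]
          constructor <;> intro h <;> omega
        rw [if_congr hcondiff rfl rfl]
        split_ifs with h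
        · rw [eD0, Polynomial.coeff_mul_X_pow' , if_pos (by omega), hi0]
          congr 1
          omega
        · rfl
      rw [Finset.sum_congr rfl hcongr, hE]
      by_cases hd : m ∣ N ∧ N / m ≤ p - 1
      · rw [if_pos hd]
        rw [Finset.sum_eq_single_of_mem (N / m) (Finset.mem_range.2 (by omega))]
        · rw [if_pos (Nat.mul_div_cancel' hd.1)]
        · intro t _ ht
          rw [if_neg]
          intro hc
          exact ht (by rw [← hc, Nat.mul_div_cancel_left t (by omega : 0 < m)])
      · rw [if_neg hd]
        apply Finset.sum_eq_zero
        intro t htr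
        rw [Finset.mem_range] at htr
        rw [if_neg]
        intro hc
        exact hd ⟨⟨t, hc.symm⟩, by rw [← hc, Nat.mul_div_cancel_left t (by omega : 0 < m)]; omega⟩
    rw [hLHS]
    -- RHS equals the same
    have hsummand : ∀ i, ∀ j, coeff d (G i j) = if i = i0 ∧ j = j0 then E else 0 := by
      intro i j
      simp only [hG]
      rw [apply_ite (coeff d), coeff_C_mul_X_pows, coeff_zero]
      by_cases hij : i = i0 ∧ j = j0
      · obtain ⟨rfl, rfl⟩ := hij
        have hd : d 0 = i * p ∧ d 1 = j * p := ⟨by rw [hi0, Nat.mul_comm], by rw [hj0, Nat.mul_comm]⟩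
        simp only [eq_self_iff_true, and_self, if_true]
        split_ifs with h1
        · rw [hE, if_pos h1]
        · rw [hE, if_neg h1]
      · rw [if_neg hij]
        split_ifs with h1 h2
        · exfalso
          apply hij
          constructor
          · exact Nat.eq_of_mul_eq_mul_right (by omega : 0 < p)
              (by rw [← h2.1, hi0, Nat.mul_comm])
          · exact Nat.eq_of_mul_eq_mul_right (by omega : 0 < p)
              (by rw [← h2.2, hj0, Nat.mul_comm])
        · rfl
        · rfl
    have hrw : ∀ i ∈ Finset.range I, (∑ j ∈ Finset.range m, coeff d (G i j))
        = if i = i0 then (if j0 ∈ Finset.range m then E else 0) else 0 := by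
      intro i _
      rw [Finset.sum_congr rfl fun j _ => hsummand i j]
      by_cases hi : i = i0
      · subst hi
        simp only [eq_self_iff_true, true_and, if_true]
        exact Finset.sum_ite_eq' (Finset.range m) j0 (fun _ => E)
      · simp only [hi, false_and, if_false, Finset.sum_const_zero]
    rw [Finset.sum_congr rfl hrw, Finset.sum_ite_eq' (Finset.range I) i0
      (fun _ => if j0 ∈ Finset.range m then E else 0)]
    rw [neg_one_mul, neg_one_mul, neg_neg]
    by_cases hiI : i0 ∈ Finset.range I
    · rw [if_pos hiI]
      by_cases hjm : j0 ∈ Finset.range m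
      · rw [if_pos hjm]
      · rw [if_neg hjm, hE, if_neg (hcond0 j0 (by rw [Finset.mem_range] at hjm; omega))]
    · rw [if_neg hiI, hE]
      rw [Finset.mem_range] at hiI
      split_ifs with hcnd
      · exact hcoeff0 _ (Nat.sub_le _ _) i0 (by omega)
      · rfl
  · rcases not_and_or.1 hab with h | h <;> rw [if_neg h]
    · rw [zero_mul]
      symm
      apply Finset.sum_eq_zero
      intro i _
      apply Finset.sum_eq_zero
      intro j _
      simp only [hG]
      rw [apply_ite (coeff d), coeff_C_mul_X_pows, coeff_zero]
      split_ifs with h1 h2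
      · exact absurd ⟨⟨i, by rw [h2.1]; ring⟩, ⟨j, by rw [h2.2]; ring⟩⟩ hab
      · rfl
      · rfl
    · rw [zero_mul, mul_zero]
      symm
      apply Finset.sum_eq_zero
      intro i _
      apply Finset.sum_eq_zero
      intro j _
      simp only [hG]
      rw [apply_ite (coeff d), coeff_C_mul_X_pows, coeff_zero]
      split_ifs with h1 h2
      · exact absurd ⟨⟨i, by rw [h2.1]; ring⟩, ⟨j, by rw [h2.2]; ring⟩⟩ hab
      · rfl
      · rfl
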